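/- Let S be a finite state set, A an action set, and φ: S × A → ℝ^d a feature map such that for every x ∈ S there exist actions a, ā with φ(x,a) ≠ φ(x,ā). Let Q = {Q : Q(·,·) = φ(·,·)ᵀ w, w ∈ ℝ^d} be the class of linear action-value functions, and for a policy π define (T_h^π Q)(x,a) = r_h(x,a) + Σ_{x'} P_h(x'|x,a) Q(x', π(x')). If T_h^π Q ⊆ Q for every policy π, then the transition kernel is linear in φ: there exists a map μ: S → ℝ^d with P_h(x₀|x,a) = ⟨φ(x,a), μ(x₀)⟩ for all x₀, x, a. -/
import Mathlib


open Matrix Finset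

/-- If the class of linear action-value functions is closed under the Bellman
operator of every policy, then the transition kernel must be linear in the
feature map. -/
theorem stmt_12 (S A : Type) [Fintype S] (d : ℕ)
    (φ : S → A → Fin d → ℝ)
    (hφ : ∀ x : S, ∃ a abar : A, φ x a ≠ φ x abar)
    (P : S → A → S → ℝ)
    (hPpos : ∀ x a x', 0 ≤ P x a x')
    (hPsum : ∀ x a, ∑ x' : S, P x a x' = 1)
    (r : S → A → ℝ)
    (hclosed : ∀ π : S → A, ∀ w : Fin d → ℝ, ∃ w' : Fin d → ℝ,
      ∀ x a, r x a + ∑ x' : S, P x a x' * (φ x' (π x') ⬝ᵥ w) = φ x a ⬝ᵥ w') :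
    ∃ μ : S → Fin d → ℝ, ∀ x₀ x a, P x a x₀ = φ x a ⬝ᵥ μ x₀ := by
  classical
  have key : ∀ x₀ : S, ∃ μ : Fin d → ℝ, ∀ x a, P x a x₀ = φ x a ⬝ᵥ μ := by
    intro x₀
    obtain ⟨a₀, abar, hne⟩ := hφ x₀
    have hv : φ x₀ a₀ - φ x₀ abar ≠ 0 := sub_ne_zero.mpr hne
    obtain ⟨i, hi⟩ := Function.ne_iff.mp hv
    set w₀ : Fin d → ℝ := Pi.single i ((φ x₀ a₀ - φ x₀ abar) i)⁻¹ with hw₀def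
    have hv1 : (φ x₀ a₀ - φ x₀ abar) ⬝ᵥ w₀ = 1 := by
      rw [hw₀def, dotProduct_single, mul_inv_cancel₀ hi]
    set πbase : S → A := fun x => (hφ x).choose
    set π₁ : S → A := fun x => if x = x₀ then a₀ else πbase x with hπ₁
    set π₂ : S → A := fun x => if x = x₀ then abar else πbase x with hπ₂
    obtain ⟨w₁, h₁⟩ := hclosed π₁ w₀
    obtain ⟨w₂, h₂⟩ := hclosed π₂ w₀
    refine ⟨w₁ - w₂, fun x a => ?_⟩
    have e : (r x a + ∑ x' : S, P x a x' * (φ x' (π₁ x') ⬝ᵥ w₀))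
           - (r x a + ∑ x' : S, P x a x' * (φ x' (π₂ x') ⬝ᵥ w₀))
           = φ x a ⬝ᵥ w₁ - φ x a ⬝ᵥ w₂ := by rw [h₁ x a, h₂ x a]
    rw [add_sub_add_left_eq_sub, ← Finset.sum_sub_distrib] at e
    rw [dotProduct_sub, ← e, Finset.sum_eq_single x₀]
    · rw [hπ₁, hπ₂]
      simp only [eq_self_iff_true, if_true, ite_true, ← mul_sub, ← sub_dotProduct, hv1, mul_one]
    · intro b _ hb
      rw [hπ₁, hπ₂]
      simp [hb]
    · simp
  exact ⟨fun x₀ => (key x₀).choose, fun x₀ => (key x₀).choose_spec⟩
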